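/- Let d : Ω × Ω → ℝ be a semi-metric on a finite set Ω of n points, i.e., d satisfies (D1) d(u,w) ≥ 0, (D2) d(u,u) = 0, and (D3) d(u,w) = d(w,u) for all u,w. Define the induced semi-cohesion measure γ(u,w) = (1/n)∑_{u₂∈Ω} d(u₂,w) + (1/n)∑_{u₁∈Ω} d(u,u₁) − (1/n²)∑_{u₂∈Ω}∑_{u₁∈Ω} d(u₂,u₁) − d(u,w). Then γ satisfies: (C1) γ(u,w) = γ(w,u) for all u,w; (C2) ∑_{w∈Ω} γ(u,w) = 0 for every u; and (C3) γ(u,u) + γ(w,w) ≥ 2γ(u,w) for all u,w. -/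
import Mathlib


open Finset

/-- A semi-metric `d` on a finite set `Ω` of `n` points induces a
semi-cohesion measure
`γ(u,w) = (1/n)∑_{u₂} d(u₂,w) + (1/n)∑_{u₁} d(u,u₁) − (1/n²)∑_{u₂}∑_{u₁} d(u₂,u₁) − d(u,w)`
satisfying symmetry, zero row sums, and `γ(u,u)+γ(w,w) ≥ 2γ(u,w)`. -/
theorem gme_semimetric_induces_semicohesion {Ω : Type*} [Fintype Ω]
    (d : Ω → Ω → ℝ)
    (hnonneg : ∀ u w, 0 ≤ d u w)
    (hnull : ∀ u, d u u = 0)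
    (hsymm : ∀ u w, d u w = d w u)
    (γ : Ω → Ω → ℝ)
    (hγ : ∀ u w, γ u w =
      (1 / (Fintype.card Ω : ℝ)) * ∑ u₂ : Ω, d u₂ w
      + (1 / (Fintype.card Ω : ℝ)) * ∑ u₁ : Ω, d u u₁
      - (1 / (Fintype.card Ω : ℝ)) ^ 2 * ∑ u₂ : Ω, ∑ u₁ : Ω, d u₂ u₁
      - d u w) :
    (∀ u w, γ u w = γ w u) ∧
    (∀ u, ∑ w : Ω, γ u w = 0) ∧
    (∀ u w, 2 * γ u w ≤ γ u u + γ w w) := by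
  have hsum : ∀ x : Ω, (∑ y : Ω, d y x) = ∑ y : Ω, d x y := by
    intro x; exact Finset.sum_congr rfl fun y _ => hsymm y x
  refine ⟨?_, ?_, ?_⟩
  · intro u w
    rw [hγ u w, hγ w u, hsymm u w, hsum w, hsum u]
    ring
  · intro u
    have hn : (Fintype.card Ω : ℝ) ≠ 0 := by
      have : 0 < Fintype.card Ω := Fintype.card_pos_iff.mpr ⟨u⟩
      positivity
    simp only [hγ u]
    rw [Finset.sum_sub_distrib, Finset.sum_sub_distrib, Finset.sum_add_distrib,
      ← Finset.mul_sum]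
    have h1 : (∑ w : Ω, ∑ u₂ : Ω, d u₂ w) = ∑ u₂ : Ω, ∑ u₁ : Ω, d u₂ u₁ := by
      rw [Finset.sum_comm]
    have h2 : (∑ w : Ω, d u w) = ∑ u₁ : Ω, d u u₁ := rfl
    rw [h1, h2, Finset.sum_const, Finset.sum_const, Finset.card_univ, nsmul_eq_mul,
      nsmul_eq_mul]
    field_simp
    ring
  · intro u w
    rw [hγ u w, hγ u u, hγ w w, hnull u, hnull w, hsum u, hsum w]
    have := hnonneg u w
    linarith
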